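/- (Preservation of the pseudo-orthonormal frame.) Let D ⊆ ℝ² be open and connected, let A, B : D → Mat₄ₓ₄(ℝ) be continuous maps satisfying A(p)·G₀ + G₀·A(p)ᵀ = 0 and B(p)·G₀ + G₀·B(p)ᵀ = 0 for every p ∈ D, and let 𝓕 : D → Mat₄ₓ₄(ℝ) be a C¹ map satisfying ∂_u 𝓕 = A·𝓕 and ∂_v 𝓕 = B·𝓕 on D. If 𝓕(p₀)·η·𝓕(p₀)ᵀ = G₀ at some point p₀ ∈ D, then 𝓕(p)·η·𝓕(p)ᵀ = G₀ for all p ∈ D; i.e. if the rows of 𝓕 form a pseudo-orthonormal frame of the Minkowski space at one point, they form a pseudo-orthonormal frame at every point of D. -/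

import Mathlib

noncomputable section

open Matrix Set

/-- ℝ⁴ as the space of quadruples of reals. -/
abbrev V4 := Fin 4 → ℝ

/-- The Minkowski inner product of signature (3,1) on ℝ⁴. -/
def mink (p q : V4) : ℝ := p 0 * q 0 + p 1 * q 1 + p 2 * q 2 - p 3 * q 3

/-- Partial derivative with respect to the first coordinate `u` of `ℝ × ℝ`. -/
def pu {E : Type*} [NormedAddCommGroup E] [NormedSpace ℝ E]
    (g : ℝ × ℝ → E) (p : ℝ × ℝ) : E := fderiv ℝ g p (1, 0)

/-- Partial derivative with respect to the second coordinate `v` of `ℝ × ℝ`. -/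
def pv {E : Type*} [NormedAddCommGroup E] [NormedSpace ℝ E]
    (g : ℝ × ℝ → E) (p : ℝ × ℝ) : E := fderiv ℝ g p (0, 1)

/-- Core Grönwall lemma: if a matrix curve `f` satisfies `f' = N f` on `[0,1]` with `N`
continuous and `N G₀ + G₀ Nᵀ = 0`, and `f 0 * η * (f 0)ᵀ = G₀`, then the same holds at `1`. -/
lemma aux_key (η G₀ : Matrix (Fin 4) (Fin 4) ℝ)
    (N f : ℝ → Matrix (Fin 4) (Fin 4) ℝ)
    (hskew : ∀ t ∈ Icc (0:ℝ) 1, N t * G₀ + G₀ * (N t)ᵀ = 0)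
    (hNc : ∀ i j, ContinuousOn (fun t => N t i j) (Icc (0:ℝ) 1))
    (hf : ∀ t ∈ Icc (0:ℝ) 1, ∀ i j, HasDerivAt (fun s => f s i j) ((N t * f t) i j) t)
    (h0 : f 0 * η * (f 0)ᵀ = G₀) : f 1 * η * (f 1)ᵀ = G₀ := by
  set gm : ℝ → Matrix (Fin 4) (Fin 4) ℝ := fun t => f t * η * (f t)ᵀ - G₀ with hgm
  -- algebraic identity for the derivative
  have halg : ∀ t ∈ Icc (0:ℝ) 1,
      (N t * f t) * η * (f t)ᵀ + f t * η * (N t * f t)ᵀ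
        = N t * gm t + gm t * (N t)ᵀ := by
    intro t ht
    have h1 : N t * G₀ = -(G₀ * (N t)ᵀ) := eq_neg_of_add_eq_zero_left (hskew t ht)
    simp only [hgm, Matrix.mul_sub, Matrix.sub_mul, Matrix.transpose_mul]
    rw [h1]
    noncomm_ring
  -- entrywise derivative of gm
  have hent : ∀ t ∈ Icc (0:ℝ) 1, ∀ i j, HasDerivAt (fun s => gm s i j)
      ((N t * gm t + gm t * (N t)ᵀ) i j) t := by
    intro t ht i j
    have hsum : HasDerivAt (fun s => ∑ l, (∑ k, f s i k * η k l) * f s j l)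
        (∑ l, ((∑ k, (N t * f t) i k * η k l) * f t j l
              + (∑ k, f t i k * η k l) * (N t * f t) j l)) t := by
      refine HasDerivAt.fun_sum fun l _ => ?_
      exact (HasDerivAt.fun_sum fun k _ => (hf t ht i k).mul_const (η k l)).mul (hf t ht j l)
    have heq : (fun s => gm s i j)
        = fun s => (∑ l, (∑ k, f s i k * η k l) * f s j l) - G₀ i j := by
      funext s
      simp [hgm, Matrix.mul_apply, Matrix.sub_apply, Matrix.transpose_apply]
    rw [heq]
    have := hsum.sub_const (G₀ i j)
    refine this.congr_deriv ?_
    rw [← halg t ht]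
    simp only [Matrix.add_apply, Matrix.mul_apply, Matrix.transpose_apply,
      Finset.sum_add_distrib]
  -- bound on N
  have hb : ∀ i j : Fin 4, ∃ C, ∀ t ∈ Icc (0:ℝ) 1, |N t i j| ≤ C := by
    intro i j
    obtain ⟨C, hC⟩ := isCompact_Icc.exists_bound_of_continuousOn (hNc i j)
    exact ⟨C, fun t ht => by simpa [Real.norm_eq_abs] using hC t ht⟩
  choose Cf hCf using hb
  obtain ⟨C, hC⟩ : ∃ C, ∀ t ∈ Icc (0:ℝ) 1, ∀ i j, |N t i j| ≤ C := by
    refine ⟨∑ i, ∑ j, |Cf i j|, fun t ht i j => (hCf i j t ht).trans ?_⟩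
    calc Cf i j ≤ |Cf i j| := le_abs_self _
      _ ≤ ∑ j', |Cf i j'| :=
        Finset.single_le_sum (f := fun j' => |Cf i j'|)
          (fun _ _ => abs_nonneg _) (Finset.mem_univ j)
      _ ≤ ∑ i', ∑ j', |Cf i' j'| :=
        Finset.single_le_sum (f := fun i' => ∑ j', |Cf i' j'|)
          (fun _ _ => Finset.sum_nonneg fun _ _ => abs_nonneg _) (Finset.mem_univ i)
  set C' : ℝ := max C 0 with hC'
  have hC'0 : 0 ≤ C' := le_max_right _ _
  have hCle : ∀ t ∈ Icc (0:ℝ) 1, ∀ i j, |N t i j| ≤ C' :=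
    fun t ht i j => le_max_of_le_left (hC t ht i j)
  -- pi-valued curve
  set G : ℝ → (Fin 4 → Fin 4 → ℝ) := fun t i j => gm t i j with hG
  set G' : ℝ → (Fin 4 → Fin 4 → ℝ) := fun t i j => (N t * gm t + gm t * (N t)ᵀ) i j with hG'
  have hGd : ∀ t ∈ Icc (0:ℝ) 1, HasDerivAt G (G' t) t := by
    intro t ht
    exact hasDerivAt_pi.2 fun i => hasDerivAt_pi.2 fun j => hent t ht i j
  have hGcont : ContinuousOn G (Icc (0:ℝ) 1) :=
    fun t ht => ((hGd t ht).continuousAt).continuousWithinAt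
  have hGnorm : ∀ t ∈ Icc (0:ℝ) 1, ∀ i j, |gm t i j| ≤ ‖G t‖ := by
    intro t ht i j
    calc |gm t i j| = ‖G t i j‖ := (Real.norm_eq_abs _).symm
      _ ≤ ‖G t i‖ := norm_le_pi_norm _ j
      _ ≤ ‖G t‖ := norm_le_pi_norm _ i
  have hbound : ∀ t ∈ Ico (0:ℝ) 1, ‖G' t‖ ≤ (8 * C') * ‖G t‖ + 0 := by
    intro t ht
    have ht' : t ∈ Icc (0:ℝ) 1 := Ico_subset_Icc_self ht
    rw [add_zero]
    have hnn : 0 ≤ 8 * C' * ‖G t‖ := by positivity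
    rw [pi_norm_le_iff_of_nonneg hnn]
    intro i
    rw [pi_norm_le_iff_of_nonneg hnn]
    intro j
    have : G' t i j = (∑ k, N t i k * gm t k j) + (∑ k, gm t i k * N t j k) := by
      simp [hG', Matrix.add_apply, Matrix.mul_apply, Matrix.transpose_apply]
    rw [Real.norm_eq_abs, this]
    have h1 : |∑ k, N t i k * gm t k j| ≤ ∑ k : Fin 4, C' * ‖G t‖ := by
      refine (Finset.abs_sum_le_sum_abs _ _).trans (Finset.sum_le_sum fun k _ => ?_)
      rw [abs_mul]
      exact mul_le_mul (hCle t ht' i k) (hGnorm t ht' k j) (abs_nonneg _) hC'0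
    have h2 : |∑ k, gm t i k * N t j k| ≤ ∑ k : Fin 4, C' * ‖G t‖ := by
      refine (Finset.abs_sum_le_sum_abs _ _).trans (Finset.sum_le_sum fun k _ => ?_)
      rw [abs_mul, mul_comm (|gm t i k|)]
      exact mul_le_mul (hCle t ht' j k) (hGnorm t ht' i k) (abs_nonneg _) hC'0
    calc |(∑ k, N t i k * gm t k j) + ∑ k, gm t i k * N t j k|
        ≤ |∑ k, N t i k * gm t k j| + |∑ k, gm t i k * N t j k| := abs_add_le _ _
      _ ≤ (∑ k : Fin 4, C' * ‖G t‖) + ∑ k : Fin 4, C' * ‖G t‖ := add_le_add h1 h2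
      _ = 8 * C' * ‖G t‖ := by simp [Finset.sum_const]; ring
  have hG0 : G 0 = 0 := by
    have hgmz : gm 0 = 0 := by rw [hgm, sub_eq_zero]; exact h0
    funext i j
    have := congrFun (congrFun hgmz i) j
    simpa [hG] using this
  have := norm_le_gronwallBound_of_norm_deriv_right_le hGcont
    (fun t ht => (hGd t (Ico_subset_Icc_self ht)).hasDerivWithinAt)
    (by rw [hG0, norm_zero]) hbound 1 (by norm_num)
  rw [gronwallBound_ε0, zero_mul] at this
  have hG1 : G 1 = 0 := norm_le_zero_iff.1 this
  have hgm1 : gm 1 = 0 := by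
    ext i j
    exact congrFun (congrFun hG1 i) j
  rw [hgm] at hgm1
  exact sub_eq_zero.1 hgm1

/-- One propagation step along a straight segment in direction `w`. -/
lemma aux_step (D : Set (ℝ × ℝ)) (hD : IsOpen D)
    (η G₀ : Matrix (Fin 4) (Fin 4) ℝ)
    (M : ℝ × ℝ → Matrix (Fin 4) (Fin 4) ℝ)
    (hMcont : ∀ i j : Fin 4, ContinuousOn (fun q => M q i j) D)
    (hMskew : ∀ p ∈ D, M p * G₀ + G₀ * (M p)ᵀ = 0)
    (F : ℝ × ℝ → Matrix (Fin 4) (Fin 4) ℝ)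
    (hFC1 : ∀ i j : Fin 4, ContDiffOn ℝ 1 (fun q => F q i j) D)
    (w : ℝ × ℝ)
    (hder : ∀ p ∈ D, ∀ i j : Fin 4, fderiv ℝ (fun q => F q i j) p w = (M p * F p) i j)
    (p : ℝ × ℝ) (c : ℝ)
    (hseg : ∀ t ∈ Icc (0:ℝ) 1, p + (t * c) • w ∈ D)
    (h0 : F p * η * (F p)ᵀ = G₀) :
    F (p + c • w) * η * (F (p + c • w))ᵀ = G₀ := by
  set γ : ℝ → ℝ × ℝ := fun t => p + (t * c) • w with hγ
  have hγ0 : γ 0 = p := by simp [hγ]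
  have hγ1 : γ 1 = p + c • w := by simp [hγ]
  have hγc : Continuous γ := by
    apply Continuous.add continuous_const
    exact (continuous_id.mul continuous_const).smul continuous_const
  have hγmem : ∀ t ∈ Icc (0:ℝ) 1, γ t ∈ D := hseg
  have hkey := aux_key η G₀ (fun t => c • M (γ t)) (fun t => F (γ t)) ?_ ?_ ?_ ?_
  · have hkey' : F (γ 1) * η * (F (γ 1))ᵀ = G₀ := hkey
    rwa [hγ1] at hkey'
  · intro t ht
    have := hMskew (γ t) (hγmem t ht)
    rw [Matrix.transpose_smul, Matrix.smul_mul, Matrix.mul_smul, ← smul_add, this, smul_zero]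
  · intro i j
    have : ContinuousOn (fun t => M (γ t) i j) (Icc (0:ℝ) 1) :=
      (hMcont i j).comp hγc.continuousOn hγmem
    simpa [Matrix.smul_apply, smul_eq_mul, Pi.smul_def] using this.const_smul c
  · intro t ht i j
    have hdmem : γ t ∈ D := hγmem t ht
    have hdiff : DifferentiableAt ℝ (fun q => F q i j) (γ t) :=
      ((hFC1 i j).contDiffAt (hD.mem_nhds hdmem)).differentiableAt one_ne_zero
    have hγd : HasDerivAt γ (c • w) t := by
      have h1 : HasDerivAt (fun s : ℝ => s * c) c t := by
        simpa using (hasDerivAt_id t).mul_const c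
      exact (h1.smul_const w).const_add p
    have hcomp := (hdiff.hasFDerivAt).comp_hasDerivAt t hγd
    have hval : fderiv ℝ (fun q => F q i j) (γ t) (c • w)
        = ((c • M (γ t)) * F (γ t)) i j := by
      rw [(fderiv ℝ (fun q => F q i j) (γ t)).map_smul, hder (γ t) hdmem i j,
        Matrix.smul_mul, Matrix.smul_apply, smul_eq_mul]
    rwa [hval] at hcomp
  · show F (γ 0) * η * (F (γ 0))ᵀ = G₀
    rwa [hγ0]


/-- Preservation of the pseudo-orthonormal frame.  If `A·G₀ + G₀·Aᵀ = 0`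
and `B·G₀ + G₀·Bᵀ = 0` on `D` and the C¹ map `𝓕` satisfies `∂_u 𝓕 = A·𝓕`,
`∂_v 𝓕 = B·𝓕` on the open connected set `D`, and the rows of `𝓕` form a
pseudo-orthonormal frame at one point (`𝓕·η·𝓕ᵀ = G₀` at `p₀`), then they form a
pseudo-orthonormal frame at every point of `D`. -/

theorem frame_remains_pseudo_orthonormal
    (D : Set (ℝ × ℝ)) (hD : IsOpen D) (hDconn : IsConnected D)
    (η G₀ : Matrix (Fin 4) (Fin 4) ℝ)
    (hη : η = Matrix.diagonal ![1, 1, 1, -1])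
    (hG₀ : G₀ = !![0, -1, 0, 0;
                   -1, 0, 0, 0;
                   0, 0, 1, 0;
                   0, 0, 0, 1])
    (A B : ℝ × ℝ → Matrix (Fin 4) (Fin 4) ℝ)
    (hAcont : ∀ i j : Fin 4, ContinuousOn (fun q => A q i j) D)
    (hBcont : ∀ i j : Fin 4, ContinuousOn (fun q => B q i j) D)
    (hAskew : ∀ p ∈ D, A p * G₀ + G₀ * (A p).transpose = 0)
    (hBskew : ∀ p ∈ D, B p * G₀ + G₀ * (B p).transpose = 0)
    (F : ℝ × ℝ → Matrix (Fin 4) (Fin 4) ℝ)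
    (hFC1 : ∀ i j : Fin 4, ContDiffOn ℝ 1 (fun q => F q i j) D)
    (hFu : ∀ p ∈ D, ∀ i j : Fin 4, pu (fun q => F q i j) p = (A p * F p) i j)
    (hFv : ∀ p ∈ D, ∀ i j : Fin 4, pv (fun q => F q i j) p = (B p * F p) i j)
    (p₀ : ℝ × ℝ) (hp₀ : p₀ ∈ D)
    (hinit : F p₀ * η * (F p₀).transpose = G₀) :
    ∀ p ∈ D, F p * η * (F p).transpose = G₀ := by
  classical
  have hFc : ∀ a b : Fin 4, ContinuousOn (fun q => F q a b) D :=
    fun a b => (hFC1 a b).continuousOn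
  have hGc : ∀ i j : Fin 4, ContinuousOn (fun q => (F q * η * (F q)ᵀ) i j) D := by
    intro i j
    simp only [Matrix.mul_apply, Matrix.transpose_apply]
    exact continuousOn_finset_sum _ fun l _ =>
      (continuousOn_finset_sum _ fun k _ => (hFc i k).mul continuousOn_const).mul (hFc j l)
  have hderA : ∀ p ∈ D, ∀ i j : Fin 4,
      fderiv ℝ (fun q => F q i j) p (((1:ℝ),(0:ℝ))) = (A p * F p) i j :=
    fun p hp i j => hFu p hp i j
  have hderB : ∀ p ∈ D, ∀ i j : Fin 4,
      fderiv ℝ (fun q => F q i j) p (((0:ℝ),(1:ℝ))) = (B p * F p) i j :=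
    fun p hp i j => hFv p hp i j
  set S : Set (ℝ × ℝ) := {q | q ∈ D ∧ F q * η * (F q)ᵀ = G₀} with hS
  set V : Set (ℝ × ℝ) := {q | q ∈ D ∧ F q * η * (F q)ᵀ ≠ G₀} with hV
  have hpt1 : ∀ (m : ℝ × ℝ) (s : ℝ), m + s • (((1:ℝ),(0:ℝ))) = (m.1 + s, m.2) := by
    intro m s
    ext <;> simp
  have hpt2 : ∀ (m : ℝ × ℝ) (s : ℝ), m + s • (((0:ℝ),(1:ℝ))) = (m.1, m.2 + s) := by
    intro m s
    ext <;> simp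
  have hSopen : IsOpen S := by
    rw [Metric.isOpen_iff]
    intro q hq
    obtain ⟨r, hr, hball⟩ := Metric.isOpen_iff.1 hD q hq.1
    refine ⟨r, hr, fun z hz => ?_⟩
    have hzd : max (dist z.1 q.1) (dist z.2 q.2) < r := by
      rw [← Prod.dist_eq]
      exact Metric.mem_ball.1 hz
    have hz1 : |z.1 - q.1| < r := by
      have := (max_lt_iff.1 hzd).1
      rwa [Real.dist_eq] at this
    have hz2 : |z.2 - q.2| < r := by
      have := (max_lt_iff.1 hzd).2
      rwa [Real.dist_eq] at this
    have hmemball : ∀ x : ℝ × ℝ, |x.1 - q.1| < r → |x.2 - q.2| < r → x ∈ D := by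
      intro x h1 h2
      apply hball
      rw [Metric.mem_ball, Prod.dist_eq, Real.dist_eq, Real.dist_eq]
      exact max_lt h1 h2
    -- step 1 : horizontal
    have hstep1 := aux_step D hD η G₀ A hAcont hAskew F hFC1 (((1:ℝ),(0:ℝ))) hderA
      q (z.1 - q.1) ?_ hq.2
    -- step 2 : vertical
    have hstep2 := aux_step D hD η G₀ B hBcont hBskew F hFC1 (((0:ℝ),(1:ℝ))) hderB
      (q + (z.1 - q.1) • (((1:ℝ),(0:ℝ)))) (z.2 - q.2) ?_ hstep1
    · have hfinal : q + (z.1 - q.1) • (((1:ℝ),(0:ℝ))) + (z.2 - q.2) • (((0:ℝ),(1:ℝ))) = z := by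
        rw [hpt1, hpt2]
        ext <;> simp
      rw [hfinal] at hstep2
      exact ⟨hmemball z hz1 hz2, hstep2⟩
    · -- vertical segment in ball
      intro t ht
      rw [hpt1, hpt2]
      apply hmemball
      · simpa using hz1
      · simp only []
        have : |(q.2 + t * (z.2 - q.2)) - q.2| = |t| * |z.2 - q.2| := by
          rw [add_sub_cancel_left, abs_mul]
        rw [this]
        calc |t| * |z.2 - q.2| ≤ 1 * |z.2 - q.2| :=
              mul_le_mul_of_nonneg_right (abs_le.2 ⟨by linarith [ht.1], ht.2⟩) (abs_nonneg _)
          _ < r := by rwa [one_mul]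
    · -- horizontal segment in ball
      intro t ht
      rw [hpt1]
      apply hmemball
      · simp only []
        have : |(q.1 + t * (z.1 - q.1)) - q.1| = |t| * |z.1 - q.1| := by
          rw [add_sub_cancel_left, abs_mul]
        rw [this]
        calc |t| * |z.1 - q.1| ≤ 1 * |z.1 - q.1| :=
              mul_le_mul_of_nonneg_right (abs_le.2 ⟨by linarith [ht.1], ht.2⟩) (abs_nonneg _)
          _ < r := by rwa [one_mul]
      · simpa using hr
  have hVopen : IsOpen V := by
    have hVeq : V = ⋃ i, ⋃ j, (D ∩ (fun q => (F q * η * (F q)ᵀ) i j) ⁻¹' {G₀ i j}ᶜ) := by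
      ext x
      simp only [hV, mem_setOf_eq, mem_iUnion, mem_inter_iff, mem_preimage, mem_compl_iff,
        mem_singleton_iff]
      constructor
      · rintro ⟨hx, hne⟩
        by_contra hcon
        push_neg at hcon
        exact hne (Matrix.ext fun i j => hcon i j hx)
      · rintro ⟨i, j, hx, hne⟩
        exact ⟨hx, fun he => hne (by rw [he])⟩
    rw [hVeq]
    exact isOpen_iUnion fun i => isOpen_iUnion fun j =>
      (hGc i j).isOpen_inter_preimage hD isOpen_compl_singleton
  intro p hp
  by_contra hne
  have hsub : D ⊆ S ∪ V := fun x hx => by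
    by_cases h : F x * η * (F x)ᵀ = G₀
    · exact Or.inl ⟨hx, h⟩
    · exact Or.inr ⟨hx, h⟩
  obtain ⟨x, hx⟩ := hDconn.isPreconnected S V hSopen hVopen hsub
    ⟨p₀, hp₀, hp₀, hinit⟩ ⟨p, hp, hp, hne⟩
  exact hx.2.2.2 hx.2.1.2
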